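/- Let N ≥ 1, let t be a nonzero complex number, and set 2y = t + 1/t. Let S⁻¹(y) be the N×N upper-triangular banded matrix with entries 1 on the main diagonal, −2y on the first superdiagonal, 1 on the second superdiagonal, and 0 elsewhere. Then S⁻¹(y) · (U(t) · U(1/t)) = I_N and (U(t) · U(1/t)) · S⁻¹(y) = I_N; i.e., the inverse of S⁻¹(y) is the product U(t)U(1/t). -/

import Mathlib

open Matrix

/-- The `N×N` upper-triangular banded matrix `S⁻¹(y)` with `1` on the main
diagonal, `−2y` on the first superdiagonal and `1` on the second
superdiagonal. -/
def Sinv (N : ℕ) (y : ℂ) : Matrix (Fin N) (Fin N) ℂ := fun i j =>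
  if (j : ℕ) = (i : ℕ) then 1
  else if (j : ℕ) = (i : ℕ) + 1 then -2 * y
  else if (j : ℕ) = (i : ℕ) + 2 then 1
  else 0

/-- The upper-triangular matrix `U(τ)` with entries `τ^{j−i}` for `i ≤ j`. -/
def Umat (N : ℕ) (τ : ℂ) : Matrix (Fin N) (Fin N) ℂ := fun i j =>
  if (i : ℕ) ≤ (j : ℕ) then τ ^ ((j : ℕ) - (i : ℕ)) else 0

/-- The bidiagonal matrix `V(τ)` with `1` on the diagonal and `-τ` on the
first superdiagonal; it is a left (and right) inverse of `U(τ)`. -/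
def Vmat (N : ℕ) (τ : ℂ) : Matrix (Fin N) (Fin N) ℂ := fun i j =>
  if (j : ℕ) = (i : ℕ) then 1 else if (j : ℕ) = (i : ℕ) + 1 then -τ else 0

lemma sum_ite_nat (N c : ℕ) (f : Fin N → ℂ) :
    (∑ k : Fin N, if (k : ℕ) = c then f k else 0)
      = if h : c < N then f ⟨c, h⟩ else 0 := by
  split
  · next h =>
    rw [Finset.sum_eq_single ⟨c, h⟩]
    · simp
    · intro b _ hb
      have : (b : ℕ) ≠ c := fun hc => hb (Fin.ext hc)
      simp [this]
    · simp
  · next h =>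
    apply Finset.sum_eq_zero
    intro k _
    have : (k : ℕ) ≠ c := by omega
    simp [this]

lemma Vmat_mul_Umat (N : ℕ) (τ : ℂ) : Vmat N τ * Umat N τ = 1 := by
  ext i j
  rw [mul_apply]
  have hsplit : ∀ k : Fin N, Vmat N τ i k * Umat N τ k j
      = (if (k : ℕ) = (i : ℕ) then Umat N τ k j else 0)
      + (if (k : ℕ) = (i : ℕ) + 1 then -τ * Umat N τ k j else 0) := by
    intro k
    unfold Vmat
    split_ifs with h1 h2 <;> first | omega | ring
  rw [Finset.sum_congr rfl (fun k _ => hsplit k), Finset.sum_add_distrib,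
    sum_ite_nat, sum_ite_nat, dif_pos i.isLt]
  by_cases h : (i : ℕ) + 1 < N
  · rw [dif_pos h]
    unfold Umat
    rcases lt_trichotomy (i : ℕ) (j : ℕ) with hij | hij | hij
    · have h1 : (i : ℕ) ≤ (j : ℕ) := le_of_lt hij
      have h2 : (i : ℕ) + 1 ≤ (j : ℕ) := hij
      have h3 : (j : ℕ) - (i : ℕ) = ((j : ℕ) - ((i : ℕ) + 1)) + 1 := by omega
      have h4 : i ≠ j := fun hc => by omega
      simp only [h1, h2, if_pos, one_apply_ne h4, h3, pow_succ]
      ring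
    · have h4 : i = j := Fin.ext hij
      have h2 : ¬ ((i : ℕ) + 1 ≤ (j : ℕ)) := by omega
      simp [h4, h2, one_apply]
    · have h1 : ¬ ((i : ℕ) ≤ (j : ℕ)) := by omega
      have h2 : ¬ ((i : ℕ) + 1 ≤ (j : ℕ)) := by omega
      have h4 : i ≠ j := fun hc => by simp [hc] at hij
      simp [h1, h2, one_apply_ne h4]
  · rw [dif_neg h]
    unfold Umat
    rcases eq_or_ne i j with h4 | h4
    · simp [h4, one_apply]
    · have hij : (i : ℕ) ≠ (j : ℕ) := fun hc => h4 (Fin.ext hc)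
      have h1 : ¬ ((i : ℕ) ≤ (j : ℕ)) := by have := j.isLt; omega
      simp [h1, one_apply_ne h4]

lemma Sinv_eq (N : ℕ) (t : ℂ) (ht : t ≠ 0) (y : ℂ) (hy : 2 * y = t + 1 / t) :
    Sinv N y = Vmat N (1 / t) * Vmat N t := by
  ext i j
  rw [mul_apply]
  have hsplit : ∀ k : Fin N, Vmat N (1 / t) i k * Vmat N t k j
      = (if (k : ℕ) = (i : ℕ) then Vmat N t k j else 0)
      + (if (k : ℕ) = (i : ℕ) + 1 then -(1 / t) * Vmat N t k j else 0) := by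
    intro k
    unfold Vmat
    split_ifs with h1 h2 <;> first | omega | ring
  rw [Finset.sum_congr rfl (fun k _ => hsplit k), Finset.sum_add_distrib,
    sum_ite_nat, sum_ite_nat, dif_pos i.isLt]
  have hinv : (1 / t) * t = 1 := by field_simp
  by_cases h : (i : ℕ) + 1 < N
  · rw [dif_pos h]
    unfold Sinv Vmat
    have hjN := j.isLt
    split_ifs <;> simp -failIfUnchanged only [Fin.val_mk] at * <;>
      first | omega | (linear_combination -hy) | ring1 | (field_simp <;> ring1)
  · rw [dif_neg h]
    unfold Sinv Vmat
    have hjN := j.isLt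
    split_ifs <;> first | omega | ring

/-- for `t ≠ 0` and `2y = t + 1/t`, the inverse of `S⁻¹(y)` is
the product `U(t) U(1/t)`. -/
theorem Sinv_inverse_eq_U_mul_U (N : ℕ) (hN : 1 ≤ N) (t : ℂ) (ht : t ≠ 0)
    (y : ℂ) (hy : 2 * y = t + 1 / t) :
    Sinv N y * (Umat N t * Umat N (1 / t)) = 1 ∧
    (Umat N t * Umat N (1 / t)) * Sinv N y = 1 := by
  have h1 := Vmat_mul_Umat N t
  have h2 := Vmat_mul_Umat N (1 / t)
  have key : Sinv N y * (Umat N t * Umat N (1 / t)) = 1 := by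
    rw [Sinv_eq N t ht y hy, mul_assoc, ← mul_assoc (Vmat N t), h1, one_mul, h2]
  exact ⟨key, mul_eq_one_comm.mp key⟩
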